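/- For all real x, y, z, the point (x, y, z) belongs to the convex hull in ℝ³ of the four points (0,0,0), (1,0,0), (0,1,0), (1,1,1) if and only if 0 ≤ x ≤ 1, 0 ≤ y ≤ 1, and max(x + y − 1, 0) ≤ z ≤ min(x, y). -/

import Mathlib

theorem frechet_hoeffding_tetrahedron (x y z : ℝ) :
    (![x, y, z] ∈ convexHull ℝ
      ({![0, 0, 0], ![1, 0, 0], ![0, 1, 0], ![1, 1, 1]} : Set (Fin 3 → ℝ))) ↔
      (0 ≤ x ∧ x ≤ 1 ∧ 0 ≤ y ∧ y ≤ 1 ∧ max (x + y - 1) 0 ≤ z ∧ z ≤ min x y) := by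
  constructor
  · intro h
    set S : Set (Fin 3 → ℝ) := {p | 0 ≤ p 0 ∧ p 0 ≤ 1 ∧ 0 ≤ p 1 ∧ p 1 ≤ 1 ∧
      p 0 + p 1 - 1 ≤ p 2 ∧ 0 ≤ p 2 ∧ p 2 ≤ p 0 ∧ p 2 ≤ p 1} with hS
    have hconv : Convex ℝ S := by
      intro u hu v hv a b ha hb hab
      simp only [hS, Set.mem_setOf_eq] at hu hv ⊢
      obtain ⟨h1,h2,h3,h4,h5,h6,h7,h8⟩ := hu
      obtain ⟨g1,g2,g3,g4,g5,g6,g7,g8⟩ := hv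
      simp only [Pi.add_apply, Pi.smul_apply, smul_eq_mul]
      refine ⟨by nlinarith, by nlinarith, by nlinarith, by nlinarith,
        by nlinarith, by nlinarith, by nlinarith, by nlinarith⟩
    have hsub : ({![0, 0, 0], ![1, 0, 0], ![0, 1, 0], ![1, 1, 1]} : Set (Fin 3 → ℝ)) ⊆ S := by
      intro p hp
      simp only [Set.mem_insert_iff, Set.mem_singleton_iff] at hp
      rcases hp with rfl | rfl | rfl | rfl <;> norm_num [hS, Matrix.cons_val_two, Matrix.tail_cons, Matrix.head_cons]
    have := convexHull_min hsub hconv h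
    simp only [hS, Set.mem_setOf_eq] at this
    obtain ⟨h1,h2,h3,h4,h5,h6,h7,h8⟩ := this
    simp only [Matrix.cons_val_zero, Matrix.cons_val_one, Matrix.head_cons] at *
    exact ⟨h1, h2, h3, h4, max_le h5 h6, le_min h7 h8⟩
  · rintro ⟨hx0, hx1, hy0, hy1, hz1, hz2⟩
    rw [max_le_iff] at hz1
    rw [le_min_iff] at hz2
    have hconv := convex_convexHull ℝ
      ({![0, 0, 0], ![1, 0, 0], ![0, 1, 0], ![1, 1, 1]} : Set (Fin 3 → ℝ))
    set w : Fin 4 → ℝ := ![1 - x - y + z, x - z, y - z, z] with hw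
    set f : Fin 4 → (Fin 3 → ℝ) := ![![0,0,0], ![1,0,0], ![0,1,0], ![1,1,1]] with hf
    have key := hconv.sum_mem (t := Finset.univ) (w := w) (z := f)
      (by intro i _; fin_cases i <;> simp [hw] <;> linarith [hz1.1, hz1.2, hz2.1, hz2.2])
      (by simp [hw, Fin.sum_univ_four]; ring)
      (by intro i _; apply subset_convexHull ℝ; fin_cases i <;> simp [hf])
    convert key using 1
    funext i
    fin_cases i <;>
      simp [hw, hf, Fin.sum_univ_four, Matrix.cons_val_zero, Matrix.cons_val_one,
        Matrix.head_cons, Matrix.vecHead, Matrix.vecTail]
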